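/- Let d ≥ 1, k ≥ 2, 1 ≤ j ≤ k−1, and n ≥ 2j be integers, and assume n − j − k + ν + d/2 ≠ 0 for all integers 0 ≤ ν ≤ j−1. Let Y be a polynomial in d variables that is homogeneous of degree n−2j and harmonic. Then the polynomial Z_j(x) = Σ_{ν=0}^{j} a_{j,ν}^n (1−‖x‖²)^ν Y(x) satisfies L_{−k} Z_j = −n(n−2k+d) Z_j. -/

import Mathlib

set_option maxHeartbeats 1000000


open MvPolynomial

/-- The Laplacian `Δ = ∑ ∂²/∂xᵢ²` acting on polynomials in `d` variables. -/
noncomputable def lap {d : ℕ} (P : MvPolynomial (Fin d) ℝ) : MvPolynomial (Fin d) ℝ :=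
  ∑ i, pderiv i (pderiv i P)

/-- The Euler operator `⟨x,∇⟩ = ∑ xᵢ ∂/∂xᵢ` acting on polynomials in `d` variables. -/
noncomputable def eulerOp {d : ℕ} (P : MvPolynomial (Fin d) ℝ) : MvPolynomial (Fin d) ℝ :=
  ∑ i, X i * pderiv i P

/-- The operator `L_μ P = ΔP − ⟨x,∇⟩²P − (2μ+d)⟨x,∇⟩P`. -/
noncomputable def Lop (d : ℕ) (μ : ℝ) (P : MvPolynomial (Fin d) ℝ) : MvPolynomial (Fin d) ℝ :=
  lap P - eulerOp (eulerOp P) - (2 * μ + (d : ℝ)) • eulerOp P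

/-- The polynomial `‖x‖² = x₁² + ⋯ + x_d²`. -/
noncomputable def normSq (d : ℕ) : MvPolynomial (Fin d) ℝ := ∑ i, X i ^ 2

/-- The coefficients `a_{j,ν}^n` from the paper:
`a_{j,ν}^n = (−1)^{j−ν} j! (−k+1)_j (n−j−k+d/2)_ν / (ν! (j−ν)! (−k+1)_ν (n−j−k+d/2)_j)`,
where `(a)_m` is the Pochhammer symbol (ascending factorial). -/
noncomputable def acoef (d k j ν : ℕ) (n : ℝ) : ℝ :=
  ((-1 : ℝ) ^ (j - ν) * (Nat.factorial j : ℝ) *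
      (ascPochhammer ℝ j).eval (-(k : ℝ) + 1) *
      (ascPochhammer ℝ ν).eval (n - (j : ℝ) - (k : ℝ) + (d : ℝ) / 2)) /
    ((Nat.factorial ν : ℝ) * (Nat.factorial (j - ν) : ℝ) *
      (ascPochhammer ℝ ν).eval (-(k : ℝ) + 1) *
      (ascPochhammer ℝ j).eval (n - (j : ℝ) - (k : ℝ) + (d : ℝ) / 2))

namespace Stmt6Aux

variable {d : ℕ}

noncomputable def eulerLM (d : ℕ) : MvPolynomial (Fin d) ℝ →ₗ[ℝ] MvPolynomial (Fin d) ℝ :=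
  ∑ i, (LinearMap.mulLeft ℝ (X i)) ∘ₗ (pderiv i).toLinearMap

lemma eulerOp_eq (P : MvPolynomial (Fin d) ℝ) : eulerOp P = eulerLM d P := by
  simp [eulerOp, eulerLM, LinearMap.sum_apply]

noncomputable def lapLM (d : ℕ) : MvPolynomial (Fin d) ℝ →ₗ[ℝ] MvPolynomial (Fin d) ℝ :=
  ∑ i, (pderiv i).toLinearMap ∘ₗ (pderiv i).toLinearMap

lemma lap_eq (P : MvPolynomial (Fin d) ℝ) : lap P = lapLM d P := by
  simp [lap, lapLM, LinearMap.sum_apply]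

lemma eulerOp_add (P Q : MvPolynomial (Fin d) ℝ) : eulerOp (P + Q) = eulerOp P + eulerOp Q := by
  simp [eulerOp_eq, map_add]

lemma eulerOp_sub (P Q : MvPolynomial (Fin d) ℝ) : eulerOp (P - Q) = eulerOp P - eulerOp Q := by
  simp [eulerOp_eq, map_sub]

lemma eulerOp_smul (r : ℝ) (P : MvPolynomial (Fin d) ℝ) : eulerOp (r • P) = r • eulerOp P := by
  simp [eulerOp_eq, map_smul]

lemma eulerOp_sum {ι : Type*} (s : Finset ι) (f : ι → MvPolynomial (Fin d) ℝ) :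
    eulerOp (∑ i ∈ s, f i) = ∑ i ∈ s, eulerOp (f i) := by
  simp [eulerOp_eq, map_sum]

lemma lap_sub (P Q : MvPolynomial (Fin d) ℝ) : lap (P - Q) = lap P - lap Q := by
  simp [lap_eq, map_sub]

lemma lap_smul (r : ℝ) (P : MvPolynomial (Fin d) ℝ) : lap (r • P) = r • lap P := by
  simp [lap_eq, map_smul]

lemma lap_sum {ι : Type*} (s : Finset ι) (f : ι → MvPolynomial (Fin d) ℝ) :
    lap (∑ i ∈ s, f i) = ∑ i ∈ s, lap (f i) := by
  simp [lap_eq, map_sum]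

lemma Lop_smul (μ r : ℝ) (P : MvPolynomial (Fin d) ℝ) : Lop d μ (r • P) = r • Lop d μ P := by
  simp only [Lop, lap_smul, eulerOp_smul, smul_sub, smul_comm r]

lemma Lop_sum {ι : Type*} (μ : ℝ) (s : Finset ι) (f : ι → MvPolynomial (Fin d) ℝ) :
    Lop d μ (∑ i ∈ s, f i) = ∑ i ∈ s, Lop d μ (f i) := by
  simp only [Lop, lap_sum, eulerOp_sum, Finset.smul_sum, Finset.sum_sub_distrib]

lemma eulerOp_mul (P Q : MvPolynomial (Fin d) ℝ) :
    eulerOp (P * Q) = eulerOp P * Q + P * eulerOp Q := by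
  simp only [eulerOp, pderiv_mul, mul_add, Finset.sum_add_distrib, Finset.sum_mul,
    Finset.mul_sum]
  congr 1
  · exact Finset.sum_congr rfl fun i _ => by ring
  · exact Finset.sum_congr rfl fun i _ => by ring

noncomputable def gdot (P Q : MvPolynomial (Fin d) ℝ) : MvPolynomial (Fin d) ℝ :=
  ∑ i, pderiv i P * pderiv i Q

lemma lap_mul (P Q : MvPolynomial (Fin d) ℝ) :
    lap (P * Q) = lap P * Q + 2 * gdot P Q + P * lap Q := by
  simp only [lap, gdot, pderiv_mul, map_add, Finset.sum_add_distrib, Finset.sum_mul,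
    Finset.mul_sum, mul_add, ← Finset.sum_add_distrib]
  exact Finset.sum_congr rfl fun i _ => by ring

lemma pderiv_normSq (i : Fin d) : pderiv i (normSq d) = C 2 * X i := by
  rw [normSq, map_sum, Finset.sum_eq_single i]
  · rw [pderiv_pow, pderiv_X_self, map_ofNat]
    push_cast
    ring
  · intro t _ ht
    rw [pderiv_pow, pderiv_X_of_ne ht, mul_zero]
  · simp

lemma eulerOp_normSq : eulerOp (normSq d) = C 2 * normSq d := by
  simp only [eulerOp, pderiv_normSq]
  rw [normSq, Finset.mul_sum]
  exact Finset.sum_congr rfl fun i _ => by ring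

lemma lap_normSq : lap (normSq d) = C (2 * (d : ℝ)) := by
  simp only [lap, pderiv_normSq, pderiv_C_mul, pderiv_X_self, mul_one, Finset.sum_const,
    Finset.card_univ, Fintype.card_fin, nsmul_eq_mul]
  rw [← C_eq_coe_nat, ← map_mul]
  ring_nf

lemma eulerOp_one : eulerOp (1 : MvPolynomial (Fin d) ℝ) = 0 := by
  simp [eulerOp, pderiv_one]

lemma eulerOp_C (r : ℝ) : eulerOp (C r : MvPolynomial (Fin d) ℝ) = 0 := by
  simp [eulerOp, pderiv_C]

lemma eulerOp_zero : eulerOp (0 : MvPolynomial (Fin d) ℝ) = 0 := by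
  simp [eulerOp_eq]

lemma lap_one : lap (1 : MvPolynomial (Fin d) ℝ) = 0 := by
  simp [lap, pderiv_one]

lemma eulerOp_u : eulerOp (1 - normSq d) = C 2 * (1 - normSq d) - C 2 := by
  rw [eulerOp_sub, eulerOp_one, eulerOp_normSq]
  ring

lemma lap_u : lap (1 - normSq d) = -C (2 * (d : ℝ)) := by
  rw [lap_sub, lap_one, lap_normSq]
  ring

lemma gdot_u (P : MvPolynomial (Fin d) ℝ) :
    gdot (1 - normSq d) P = -(C 2 * eulerOp P) := by
  have hpd : ∀ i : Fin d, pderiv i (1 - normSq d) = -(C 2 * X i) := by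
    intro i
    rw [map_sub, pderiv_one, pderiv_normSq]
    ring
  simp only [gdot, hpd, eulerOp, Finset.mul_sum, ← Finset.sum_neg_distrib]
  exact Finset.sum_congr rfl fun i _ => by ring

lemma Lop_u_mul (μ : ℝ) (P : MvPolynomial (Fin d) ℝ) :
    Lop d μ ((1 - normSq d) * P) =
      (1 - normSq d) * Lop d μ P - C 4 * ((1 - normSq d) * eulerOp P)
        + C (4 + 4 * μ) * P - C (4 + 4 * μ + 2 * (d : ℝ)) * ((1 - normSq d) * P) := by
  simp only [Lop, lap_mul, lap_u, gdot_u, eulerOp_mul, eulerOp_add, eulerOp_sub, eulerOp_C,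
    eulerOp_u, eulerOp_one, eulerOp_normSq, eulerOp_zero, smul_eq_C_mul, mul_zero, zero_mul]
  simp only [map_add, map_mul, map_sub, map_neg, map_ofNat, map_one, map_zero]
  ring

lemma eulerOp_monomial (s : Fin d →₀ ℕ) (a : ℝ) :
    eulerOp (monomial s a) = ((Finsupp.degree s : ℕ) : ℝ) • monomial s a := by
  have h : ∀ i : Fin d, X i * pderiv i (monomial s a) = ((s i : ℕ) : ℝ) • monomial s a := by
    intro i
    rw [pderiv_monomial]
    by_cases h0 : s i = 0
    · simp [h0]
    · have hle : Finsupp.single i 1 ≤ s := Finsupp.single_le_iff.mpr (by omega)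
      have hX : (X i : MvPolynomial (Fin d) ℝ) = monomial (Finsupp.single i 1) 1 := by
        rw [← pow_one (X i), X_pow_eq_monomial]
      rw [hX, monomial_mul, add_tsub_cancel_of_le hle, smul_monomial]
      congr 1
      rw [smul_eq_mul]
      ring
  rw [eulerOp]
  simp only [h]
  rw [← Finset.sum_smul]
  congr 1
  rw [Finsupp.degree_apply]
  push_cast
  exact (Finset.sum_subset (Finset.subset_univ s.support)
    (fun i _ hi => by rw [Finsupp.notMem_support_iff.mp hi, Nat.cast_zero])).symm

lemma eulerOp_isHomogeneous {m : ℕ} {P : MvPolynomial (Fin d) ℝ} (h : P.IsHomogeneous m) :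
    eulerOp P = (m : ℝ) • P := by
  conv_lhs => rw [P.as_sum]
  rw [eulerOp_sum]
  conv_rhs => rw [P.as_sum, Finset.smul_sum]
  refine Finset.sum_congr rfl fun s hs => ?_
  rw [eulerOp_monomial]
  have hdeg : Finsupp.degree s = m := by
    have h2 := h (mem_support_iff.mp hs)
    rw [Finsupp.degree_eq_weight_one]
    exact h2
  rw [hdeg]

section Ind

variable (μ : ℝ) (Y : MvPolynomial (Fin d) ℝ) (m : ℝ)

lemma euler_pow_succ (hY : eulerOp Y = m • Y) (ν : ℕ) :
    eulerOp ((1 - normSq d) ^ (ν + 1) * Y) =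
      (m + 2 * ((ν : ℝ) + 1)) • ((1 - normSq d) ^ (ν + 1) * Y)
        - (2 * ((ν : ℝ) + 1)) • ((1 - normSq d) ^ ν * Y) := by
  induction ν with
  | zero =>
    rw [pow_one, pow_zero, one_mul, eulerOp_mul, eulerOp_u, hY]
    simp only [smul_eq_C_mul, map_add, map_mul, map_ofNat, map_one, map_sub, map_neg,
      Nat.cast_zero, map_zero, mul_zero, zero_mul]
    ring
  | succ w ih =>
    have hsplit : (1 - normSq d) ^ (w + 1 + 1) * Y
        = (1 - normSq d) * ((1 - normSq d) ^ (w + 1) * Y) := by ring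
    rw [hsplit, eulerOp_mul, eulerOp_u, ih]
    simp only [smul_eq_C_mul, map_add, map_mul, map_ofNat, map_one, map_sub, map_neg,
      Nat.cast_add, Nat.cast_one]
    ring

lemma Lop_Y (hY : eulerOp Y = m • Y) (hharm : lap Y = 0) :
    Lop d μ Y = (-m * (m + 2 * μ + (d : ℝ))) • Y := by
  rw [Lop, hharm, hY, eulerOp_smul, hY]
  simp only [smul_smul, smul_eq_C_mul, map_add, map_mul, map_ofNat, map_neg, zero_sub]
  ring

lemma Lop_pow_succ (hY : eulerOp Y = m • Y) (hharm : lap Y = 0) (ν : ℕ) :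
    Lop d μ ((1 - normSq d) ^ (ν + 1) * Y) =
      (-(m + 2 * ((ν : ℝ) + 1)) * (m + 2 * ((ν : ℝ) + 1) + 2 * μ + (d : ℝ))) •
          ((1 - normSq d) ^ (ν + 1) * Y)
        + (4 * ((ν : ℝ) + 1) * ((ν : ℝ) + 1 + μ)) • ((1 - normSq d) ^ ν * Y) := by
  induction ν with
  | zero =>
    rw [pow_one, pow_zero, one_mul, Lop_u_mul, Lop_Y μ Y m hY hharm, hY]
    simp only [smul_eq_C_mul, map_add, map_mul, map_ofNat, map_one, map_sub, map_neg,
      Nat.cast_zero, map_zero, mul_zero, zero_mul]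
    ring
  | succ w ih =>
    have hsplit : (1 - normSq d) ^ (w + 1 + 1) * Y
        = (1 - normSq d) * ((1 - normSq d) ^ (w + 1) * Y) := by ring
    rw [hsplit, Lop_u_mul, ih, euler_pow_succ Y m hY w]
    simp only [smul_eq_C_mul, map_add, map_mul, map_ofNat, map_one, map_sub, map_neg,
      Nat.cast_add, Nat.cast_one]
    ring

lemma Lop_pow (hY : eulerOp Y = m • Y) (hharm : lap Y = 0) (ν : ℕ) :
    Lop d μ ((1 - normSq d) ^ ν * Y) =
      (-(m + 2 * (ν : ℝ)) * (m + 2 * (ν : ℝ) + 2 * μ + (d : ℝ))) • ((1 - normSq d) ^ ν * Y)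
        + (4 * (ν : ℝ) * ((ν : ℝ) + μ)) • ((1 - normSq d) ^ (ν - 1) * Y) := by
  cases ν with
  | zero =>
    rw [pow_zero, one_mul, Lop_Y μ Y m hY hharm]
    norm_num
  | succ w =>
    have := Lop_pow_succ μ Y m hY hharm w
    rw [this]
    push_cast
    norm_num
end Ind


lemma poch_ne_beta (k t : ℕ) (ht : t < k) : (ascPochhammer ℝ t).eval (-(k : ℝ) + 1) ≠ 0 := by
  induction t with
  | zero => simp
  | succ w ih =>
    rw [ascPochhammer_succ_eval]
    refine mul_ne_zero (ih (by omega)) ?_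
    have hw : (w : ℝ) + 1 < (k : ℝ) := by exact_mod_cast ht
    intro hc
    linarith

lemma poch_ne_alpha (j t : ℕ) (α : ℝ) (hα : ∀ ν : ℕ, ν ≤ j - 1 → α + (ν : ℝ) ≠ 0)
    (hj : 1 ≤ j) (ht : t ≤ j) : (ascPochhammer ℝ t).eval α ≠ 0 := by
  induction t with
  | zero => simp
  | succ w ih =>
    rw [ascPochhammer_succ_eval]
    exact mul_ne_zero (ih (by omega)) (hα w (by omega))



lemma coef_step (d k j n : ℕ) (hk : 2 ≤ k) (hj1 : 1 ≤ j) (hjk : j ≤ k - 1)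
    (hne : ∀ ν : ℕ, ν ≤ j - 1 → (n : ℝ) - (j : ℝ) - (k : ℝ) + (ν : ℝ) + (d : ℝ) / 2 ≠ 0)
    (ν : ℕ) (hν : ν < j) :
    acoef d k j ν (n : ℝ) *
        (-(((n : ℝ) - 2 * (j : ℝ)) + 2 * (ν : ℝ)) *
          (((n : ℝ) - 2 * (j : ℝ)) + 2 * (ν : ℝ) + 2 * (-(k : ℝ)) + (d : ℝ)))
      + acoef d k j (ν + 1) (n : ℝ) * (4 * ((ν : ℝ) + 1) * ((ν : ℝ) + 1 + -(k : ℝ)))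
    = (-(n : ℝ) * ((n : ℝ) - 2 * (k : ℝ) + (d : ℝ))) * acoef d k j ν (n : ℝ) := by
  obtain ⟨δ, rfl⟩ : ∃ δ, j = ν + δ + 1 := ⟨j - ν - 1, by omega⟩
  have halpha : ∀ w : ℕ, w ≤ ν + δ →
      (n : ℝ) - ((ν : ℝ) + (δ : ℝ) + 1) - (k : ℝ) + (d : ℝ) / 2 + (w : ℝ) ≠ 0 := by
    intro w hw h0
    refine hne w (by omega) ?_
    push_cast
    linarith
  have hPα : ∀ t : ℕ, t ≤ ν + δ + 1 →
      (ascPochhammer ℝ t).eval ((n : ℝ) - ((ν : ℝ) + (δ : ℝ) + 1) - (k : ℝ) + (d : ℝ) / 2) ≠ 0 := by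
    intro t ht
    refine poch_ne_alpha (ν + δ + 1) t _ (fun w hw => halpha w (by omega)) (by omega) ht
  have hb1 : (ascPochhammer ℝ ν).eval (-(k : ℝ) + 1) ≠ 0 := poch_ne_beta k ν (by omega)
  have hb2 : (-(k : ℝ) + 1 + (ν : ℝ)) ≠ 0 := by
    have : (ν : ℝ) + 1 < (k : ℝ) := by exact_mod_cast (by omega : ν + 1 < k)
    intro hc; linarith
  have ha1 : (ascPochhammer ℝ (ν + δ + 1)).eval
      ((n : ℝ) - ((ν : ℝ) + (δ : ℝ) + 1) - (k : ℝ) + (d : ℝ) / 2) ≠ 0 := hPα _ le_rfl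
  have hf1 : ((Nat.factorial ν : ℝ)) ≠ 0 := Nat.cast_ne_zero.mpr (Nat.factorial_ne_zero _)
  have hf2 : ((Nat.factorial δ : ℝ)) ≠ 0 := Nat.cast_ne_zero.mpr (Nat.factorial_ne_zero _)
  unfold acoef
  have e1 : ν + δ + 1 - ν = δ + 1 := by omega
  have e2 : ν + δ + 1 - (ν + 1) = δ := by omega
  have hδ1 : ((δ : ℝ) + 1) ≠ 0 := by positivity
  have hν1 : ((ν : ℝ) + 1) ≠ 0 := by positivity
  rw [e1, e2, ascPochhammer_succ_eval (S := ℝ) ν, ascPochhammer_succ_eval (S := ℝ) ν,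
    Nat.factorial_succ ν, Nat.factorial_succ δ]
  push_cast
  push_cast at hb1 hb2 ha1
  set q := (ascPochhammer ℝ ν).eval (-(k : ℝ) + 1) with hqdef
  set p := (ascPochhammer ℝ ν).eval ((n : ℝ) - ((ν : ℝ) + (δ : ℝ) + 1) - (k : ℝ) + (d : ℝ) / 2)
    with hpdef
  set pj := (ascPochhammer ℝ (ν + δ + 1)).eval
    ((n : ℝ) - ((ν : ℝ) + (δ : ℝ) + 1) - (k : ℝ) + (d : ℝ) / 2) with hpjdef
  set qj := (ascPochhammer ℝ (ν + δ + 1)).eval (-(k : ℝ) + 1) with hqjdef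
  field_simp
  ring

end Stmt6Aux

/-- the polynomial `Z_j = Σ_{ν=0}^{j} a_{j,ν}^n (1−‖x‖²)^ν Y`, with `Y`
harmonic and homogeneous of degree `n−2j`, satisfies `L_{−k} Z_j = −n(n−2k+d) Z_j`. -/
theorem stmt6 (d k j n : ℕ) (hd : 1 ≤ d) (hk : 2 ≤ k) (hj1 : 1 ≤ j) (hjk : j ≤ k - 1)
    (hn : 2 * j ≤ n)
    (hne : ∀ ν : ℕ, ν ≤ j - 1 → (n : ℝ) - (j : ℝ) - (k : ℝ) + (ν : ℝ) + (d : ℝ) / 2 ≠ 0)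
    (Y : MvPolynomial (Fin d) ℝ) (hhom : Y.IsHomogeneous (n - 2 * j)) (hharm : lap Y = 0) :
    Lop d (-(k : ℝ))
        (∑ ν ∈ Finset.range (j + 1), acoef d k j ν (n : ℝ) • ((1 - normSq d) ^ ν * Y)) =
      (-(n : ℝ) * ((n : ℝ) - 2 * (k : ℝ) + (d : ℝ))) •
        (∑ ν ∈ Finset.range (j + 1), acoef d k j ν (n : ℝ) • ((1 - normSq d) ^ ν * Y)) := by

  have hY : eulerOp Y = ((n : ℝ) - 2 * (j : ℝ)) • Y := by
    have h1 := Stmt6Aux.eulerOp_isHomogeneous hhom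
    rw [h1]
    congr 1
    rw [Nat.cast_sub hn]
    push_cast
    ring
  rw [Stmt6Aux.Lop_sum, Finset.smul_sum]
  simp only [Stmt6Aux.Lop_smul,
    Stmt6Aux.Lop_pow (-(k : ℝ)) Y ((n : ℝ) - 2 * (j : ℝ)) hY hharm, smul_add, smul_smul]
  rw [Finset.sum_add_distrib]
  conv_lhs => rw [Finset.sum_range_succ]
  conv_lhs => rw [Finset.sum_range_succ']
  conv_rhs => rw [Finset.sum_range_succ]
  simp only [Nat.add_sub_cancel, Nat.cast_zero, mul_zero, zero_mul, zero_smul, add_zero]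
  rw [add_right_comm]
  congr 1
  · rw [← Finset.sum_add_distrib]
    refine Finset.sum_congr rfl fun i hi => ?_
    rw [← add_smul]
    congr 1
    have hstep := Stmt6Aux.coef_step d k j n hk hj1 hjk hne i (Finset.mem_range.mp hi)
    push_cast
    push_cast at hstep
    linear_combination hstep
  · congr 1
    push_cast
    ring
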